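/- For every integer k ≥ 2 and every integer n ≥ 0, C_k(n) ≤ 1 + Σ_{m=0}^{n−1} k^(m+1) · C_{k−1}(n−m+1)^m · C_{k−1}(n−m). -/

import Mathlib

/-- Simon's congruence: `x ∼ₙ y` iff `x` and `y` have the same subwords
(scattered subsequences) of length at most `n`. -/
def SimonCong {α : Type*} (n : ℕ) (x y : List α) : Prop :=
  ∀ w : List α, w.length ≤ n → (w.Sublist x ↔ w.Sublist y)

/-- Simon's congruence as a setoid on words over `α`. -/
def simonSetoid (α : Type*) (n : ℕ) : Setoid (List α) :=
  ⟨SimonCong n,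
    ⟨fun _ _ _ => Iff.rfl,
     fun h w hw => (h w hw).symm,
     fun h1 h2 w hw => (h1 w hw).trans (h2 w hw)⟩⟩

/-- `simonIndex k n` is `C_k(n)`, the number of equivalence classes of
Simon's congruence `∼ₙ` over a `k`-letter alphabet. -/
noncomputable def simonIndex (k n : ℕ) : ℕ :=
  Nat.card (Quotient (simonSetoid (Fin k) n))

/-! ### Finiteness -/

lemma simon_finite (α : Type*) [Finite α] (n : ℕ) :
    Finite (Quotient (simonSetoid α n)) := by
  have hfin : Finite {l : List α // l.length ≤ n} := (List.finite_length_le α n).to_subtype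
  apply Finite.of_injective
    (fun q : Quotient (simonSetoid α n) =>
      (fun w : {l : List α // l.length ≤ n} => w.val.Sublist q.out : _ → Prop))
  intro q q' h
  rw [← Quotient.out_eq q, ← Quotient.out_eq q']
  apply Quotient.sound
  intro w hw
  have := congrFun h ⟨w, hw⟩
  simp only [eq_iff_iff] at this
  exact this

/-! ### assemble and richness -/

def assemble {α : Type*} (bs : List (List α × α)) (v : List α) : List α :=
  bs.foldr (fun p acc => p.1 ++ p.2 :: acc) v

@[simp] lemma assemble_nil {α : Type*} (v : List α) : assemble [] v = v := rfl

@[simp] lemma assemble_cons {α : Type*} (p : List α × α) (bs : List (List α × α)) (v : List α) :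
    assemble (p :: bs) v = p.1 ++ p.2 :: assemble bs v := rfl

lemma cons_sublist_append_of_mem {α : Type*} {c : α} {p r s : List α}
    (hc : c ∈ p) (hs : s.Sublist r) : (c :: s).Sublist (p ++ r) := by
  obtain ⟨x, y, rfl⟩ := List.append_of_mem hc
  have h1 : (c :: s).Sublist (c :: (y ++ r)) :=
    (hs.trans (List.sublist_append_right y r)).cons₂ c
  have h2 : (c :: (y ++ r)).Sublist (x ++ (c :: (y ++ r))) := List.sublist_append_right _ _
  simpa using h1.trans h2

lemma rich_sublist {α : Type*} (bs : List (List α × α)) (v : List α)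
    (hb : ∀ p ∈ bs, ∀ b : α, b ≠ p.2 → b ∈ p.1) :
    ∀ s : List α, s.length ≤ bs.length → s.Sublist (assemble bs v) := by
  induction bs with
  | nil => intro s hs; simp at hs; simp [hs]
  | cons p bs ih =>
    intro s hs
    cases s with
    | nil => exact List.nil_sublist _
    | cons c s' =>
      have hc : c ∈ p.1 ++ [p.2] := by
        by_cases h : c = p.2
        · simp [h]
        · exact List.mem_append_left _ (hb p (by simp) c h)
      have hs' : s'.Sublist (assemble bs v) :=
        ih (fun q hq => hb q (List.mem_cons_of_mem _ hq)) s' (by simpa using hs)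
      have := cons_sublist_append_of_mem hc hs'
      simpa [assemble_cons] using this
/-! ### The transfer lemma -/

lemma transfer_one {α : Type*} {L₁ : ℕ} {u u' : List α} {a : α}
    (hu : SimonCong L₁ u u') {q : List α} (hq : q.Sublist (u ++ [a]))
    (hlen : q.length ≤ L₁) : q.Sublist (u' ++ [a]) := by
  obtain ⟨q₀, q₁, rfl, h₀, h₁⟩ := List.sublist_append_iff.mp hq
  exact ((hu q₀ (le_trans (by simp) hlen)).mp h₀).append h₁

lemma transfer {α : Type*} (L₁ L₂ : ℕ) (v v' : List α) (hv : SimonCong L₂ v v') :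
    ∀ (bs bs' : List (List α × α)) (n : ℕ),
    List.Forall₂ (fun p q => p.2 = q.2 ∧ SimonCong L₁ p.1 q.1) bs bs' →
    (∀ p ∈ bs', ∀ b : α, b ≠ p.2 → b ∈ p.1) →
    n + 1 ≤ L₁ + bs.length →
    n ≤ L₂ + bs.length →
    ∀ s : List α, s.length ≤ n → s.Sublist (assemble bs v) → s.Sublist (assemble bs' v') := by
  intro bs
  induction bs with
  | nil =>
    intro bs' n hfa _ _ hC2 s hs hsub
    obtain rfl := List.forall₂_nil_left_iff.mp hfa
    exact (hv s (le_trans hs (by simpa using hC2))).mp hsub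
  | cons p bs ih =>
    intro bs' n hfa hb' hC1 hC2 s hs hsub
    obtain ⟨q', bs'', hpq, hfa', rfl⟩ := List.forall₂_cons_left_iff.mp hfa
    obtain ⟨u, a⟩ := p
    obtain ⟨u', a'⟩ := q'
    obtain ⟨ha, hu⟩ := hpq
    simp only at ha hu
    subst ha
    simp only [List.length_cons] at hC1 hC2
    have hb'' : ∀ r ∈ bs'', ∀ b : α, b ≠ r.2 → b ∈ r.1 :=
      fun r hr => hb' r (List.mem_cons_of_mem _ hr)
    set A := assemble bs v with hA
    set A' := assemble bs'' v' with hA'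
    have goalEq : assemble ((u', a) :: bs'') v' = (u' ++ [a]) ++ A' := by simp [hA']
    rw [goalEq]
    have hsrc : assemble ((u, a) :: bs) v = (u ++ [a]) ++ A := by simp [hA]
    rw [hsrc] at hsub
    have IH : 1 ≤ n → ∀ s' : List α, s'.length ≤ n - 1 → s'.Sublist A → s'.Sublist A' := by
      intro hn s' hl hsub'
      exact ih bs'' (n-1) hfa' hb'' (by omega) (by omega) s' hl hsub'
    obtain ⟨q, r, rfl, hq, hr⟩ := List.sublist_append_iff.mp hsub
    simp only [List.length_append] at hs
    rcases Nat.lt_or_ge L₁ q.length with hcase | hcase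
    · -- q too long: use richness of bs''
      have hlenbs : bs.length = bs''.length := hfa'.length_eq
      have htk : (q.take L₁).Sublist (u' ++ [a]) :=
        transfer_one hu ((q.take_sublist L₁).trans hq) (by simp)
      have hrest : (q.drop L₁ ++ r).length ≤ bs''.length := by
        rw [List.length_append, List.length_drop]; omega
      have hrich : (q.drop L₁ ++ r).Sublist A' := rich_sublist bs'' v' hb'' _ hrest
      have hcomb : (q.take L₁ ++ (q.drop L₁ ++ r)).Sublist ((u' ++ [a]) ++ A') :=
        htk.append hrich
      simpa [← List.append_assoc, List.take_append_drop] using hcomb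
    · rcases Nat.eq_zero_or_pos q.length with hq0 | hq1
      · -- q empty
        have hqnil : q = [] := List.length_eq_zero_iff.mp hq0
        subst hqnil
        simp only [List.nil_append] at hs ⊢
        rcases Nat.lt_or_ge r.length n with hrn | hrn
        · exact (IH (by omega) r (by omega) hr).trans (List.sublist_append_right _ _)
        · -- r.length = n; peel head
          cases r with
          | nil => exact List.nil_sublist _
          | cons c r' =>
            have hc : c ∈ u' ++ [a] := by
              by_cases hca : c = a
              · simp [hca]
              · exact List.mem_append_left _ (hb' (u', a) (by simp) c hca)
            have hr' : r'.Sublist A := (List.sublist_cons_self c r').trans hr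
            have hlr' : r'.length ≤ n - 1 := by
              simp only [List.length_cons] at hs; omega
            have : r'.Sublist A' := IH (by simp only [List.length_cons] at hs; omega) r' hlr' hr'
            exact cons_sublist_append_of_mem hc this
      · -- 1 ≤ |q| ≤ L₁
        have h1 : q.Sublist (u' ++ [a]) := transfer_one hu hq hcase
        have h2 : r.Sublist A' := IH (by omega) r (by omega) hr
        exact h1.append h2
/-! ### Greedy decomposition -/

lemma exists_full_prefix {K : ℕ} {w : List (Fin (K+1))} (h : ∀ a : Fin (K+1), a ∈ w) :
    ∃ i, ∀ a : Fin (K+1), a ∈ w.take (i+1) :=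
  ⟨w.length, fun a => by rw [List.take_of_length_le (by omega)]; exact h a⟩

def deco {K : ℕ} : ℕ → List (Fin (K+1)) → List (List (Fin (K+1)) × Fin (K+1)) × List (Fin (K+1))
  | 0, w => ([], w)
  | fuel+1, w =>
    if h : ∀ a : Fin (K+1), a ∈ w then
      let i := Nat.find (exists_full_prefix h)
      let d := deco fuel (w.drop (i+1))
      ((w.take i, (w.drop i).headI) :: d.1, d.2)
    else ([], w)

lemma deco_spec {K : ℕ} : ∀ (fuel : ℕ) (w : List (Fin (K+1))),
    assemble (deco fuel w).1 (deco fuel w).2 = w ∧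
    (deco fuel w).1.length ≤ fuel ∧
    (∀ p ∈ (deco fuel w).1, p.2 ∉ p.1 ∧ ∀ b : Fin (K+1), b ≠ p.2 → b ∈ p.1) ∧
    ((deco fuel w).1.length < fuel → ∃ a : Fin (K+1), a ∉ (deco fuel w).2) := by
  intro fuel
  induction fuel with
  | zero => intro w; simp [deco]
  | succ fuel ih =>
    intro w
    by_cases h : ∀ a : Fin (K+1), a ∈ w
    · set i := Nat.find (exists_full_prefix h) with hi
      have hP : ∀ a : Fin (K+1), a ∈ w.take (i+1) := Nat.find_spec (exists_full_prefix h)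
      have hilt : i < w.length := by
        by_contra hge
        push_neg at hge
        rcases Nat.eq_zero_or_pos i with h0 | h1
        · have : w = [] := List.eq_nil_of_length_eq_zero (by omega)
          subst this
          simpa using hP 0
        · have : ∀ a : Fin (K+1), a ∈ w.take ((i-1)+1) := by
            intro a
            rw [List.take_of_length_le (by omega)]
            exact h a
          exact absurd this (Nat.find_min (exists_full_prefix h) (by omega))
      have hdrop : w.drop i = w[i] :: w.drop (i+1) := List.drop_eq_getElem_cons hilt
      have hhead : (w.drop i).headI = w[i] := by rw [hdrop]; rfl
      have htake : w.take (i+1) = w.take i ++ [w[i]] := by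
        rw [List.take_succ]
        congr 1
        rw [List.getElem?_eq_getElem hilt]
        rfl
      have hnotall : ¬ ∀ a : Fin (K+1), a ∈ w.take i := by
        rcases Nat.eq_zero_or_pos i with h0 | h1
        · intro hall; rw [h0] at hall; simpa using hall 0
        · intro hall
          have : ∀ a : Fin (K+1), a ∈ w.take ((i-1)+1) := by
            intro a
            have : (i-1)+1 = i := by omega
            rw [this]
            exact hall a
          exact absurd this (Nat.find_min (exists_full_prefix h) (by omega))
      have hanotin : w[i] ∉ w.take i := by
        intro hmem
        apply hnotall
        intro b
        have := hP b
        rw [htake] at this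
        rcases List.mem_append.mp this with h' | h'
        · exact h'
        · simpa [List.mem_singleton.mp h'] using hmem
      have hothers : ∀ b : Fin (K+1), b ≠ w[i] → b ∈ w.take i := by
        intro b hb
        have := hP b
        rw [htake] at this
        rcases List.mem_append.mp this with h' | h'
        · exact h'
        · exact absurd (List.mem_singleton.mp h') hb
      obtain ⟨ih1, ih2, ih3, ih4⟩ := ih (w.drop (i+1))
      have hde : deco (fuel+1) w =
          ((w.take i, (w.drop i).headI) :: (deco fuel (w.drop (i+1))).1,
            (deco fuel (w.drop (i+1))).2) := by
        rw [deco, dif_pos h]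
      rw [hde]
      refine ⟨?_, by simpa using ih2, ?_, ?_⟩
      · simp only [assemble_cons, ih1, hhead]
        rw [← hdrop, List.take_append_drop]
      · intro p hp
        rcases List.mem_cons.mp hp with h' | h'
        · subst h'
          exact ⟨by simpa [hhead] using hanotin, by simpa [hhead] using hothers⟩
        · exact ih3 p h'
      · intro hlen
        simp only [List.length_cons] at hlen
        exact ih4 (by omega)
    · rw [deco, dif_neg h]
      push_neg at h
      exact ⟨rfl, by simp, by simp, fun _ => h⟩
/-! ### Relabeling -/

def rr {K : ℕ} (a : Fin (K+2)) (c : Fin (K+2)) : Fin (K+1) :=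
  if h : (c : ℕ) < (a : ℕ) then ⟨c, by have := a.isLt; omega⟩
  else ⟨(c : ℕ) - 1, by have := c.isLt; omega⟩

def ee {K : ℕ} (a : Fin (K+2)) (d : Fin (K+1)) : Fin (K+2) :=
  if (d : ℕ) < (a : ℕ) then ⟨d, by have := d.isLt; omega⟩ else ⟨(d : ℕ) + 1, by have := d.isLt; omega⟩

lemma ee_rr {K : ℕ} {a c : Fin (K+2)} (h : c ≠ a) : ee a (rr a c) = c := by
  have hval : (c : ℕ) ≠ (a : ℕ) := fun hh => h (Fin.ext hh)
  unfold rr ee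
  split_ifs with h1 h2 h3 <;> (apply Fin.ext; simp at * <;> omega)

lemma simonCong_map {α β : Type*} (f : α → β) {n : ℕ} {x y : List α}
    (h : SimonCong n x y) : SimonCong n (x.map f) (y.map f) := by
  intro w hw
  constructor <;> intro hsub <;>
  · obtain ⟨w', hw', rfl⟩ := List.sublist_map_iff.mp hsub
    refine List.Sublist.map f ?_
    first
    | exact (h w' (by simpa using hw)).mp hw'
    | exact (h w' (by simpa using hw)).mpr hw'

lemma map_rr_recover {K : ℕ} {a : Fin (K+2)} {u : List (Fin (K+2))} (h : a ∉ u) :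
    (u.map (rr a)).map (ee a) = u := by
  rw [List.map_map]
  have : ∀ c ∈ u, (ee a ∘ rr a) c = c := fun c hc =>
    ee_rr (fun hh => h (hh ▸ hc))
  exact (List.map_congr_left this).trans (List.map_id _)

lemma cong_of_relabel {K : ℕ} {a : Fin (K+2)} {L : ℕ} {u u' : List (Fin (K+2))}
    (hu : a ∉ u) (hu' : a ∉ u')
    (h : SimonCong L (u.map (rr a)) (u'.map (rr a))) : SimonCong L u u' := by
  have := simonCong_map (ee a) h
  rwa [map_rr_recover hu, map_rr_recover hu'] at this

open Classical in
noncomputable def miss {K : ℕ} (v : List (Fin (K+2))) : Fin (K+2) :=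
  if h : ∃ a : Fin (K+2), a ∉ v then h.choose else 0

lemma miss_spec {K : ℕ} {v : List (Fin (K+2))} (h : ∃ a : Fin (K+2), a ∉ v) :
    miss v ∉ v := by
  rw [miss, dif_pos h]
  exact h.choose_spec
/-! ### The data map -/

abbrev QK (K n : ℕ) := Quotient (simonSetoid (Fin (K+2)) n)

abbrev Dm (K n m : ℕ) : Type :=
  (Fin m → Fin (K+2) × Quotient (simonSetoid (Fin (K+1)) (n - m + 1))) ×
  (Fin (K+2) × Quotient (simonSetoid (Fin (K+1)) (n - m)))

noncomputable def levelFn (K n : ℕ) (q : QK K n) : Option (Fin n) :=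
  if h : (deco n q.out).1.length < n then some ⟨_, h⟩ else none

noncomputable def fiberFn (K n m : ℕ) (q : QK K n) : Dm K n m :=
  (fun i =>
    if h : (i : ℕ) < (deco n q.out).1.length then
      (((deco n q.out).1.get ⟨i, h⟩).2,
        Quotient.mk (simonSetoid (Fin (K+1)) (n - m + 1))
          ((((deco n q.out).1.get ⟨i, h⟩).1).map (rr (((deco n q.out).1.get ⟨i, h⟩).2))))
    else (0, Quotient.mk (simonSetoid (Fin (K+1)) (n - m + 1)) []),
  (miss (deco n q.out).2,
    Quotient.mk (simonSetoid (Fin (K+1)) (n - m))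
      (((deco n q.out).2).map (rr (miss (deco n q.out).2)))))

lemma level_none_rich {K n : ℕ} {q : QK K n} (hq : levelFn K n q = none) :
    ∀ s : List (Fin (K+2)), s.length ≤ n → s.Sublist q.out := by
  rw [levelFn] at hq
  split_ifs at hq with h
  push_neg at h
  obtain ⟨h1, _, h3, _⟩ := deco_spec n q.out
  intro s hs
  have : s.Sublist (assemble (deco n q.out).1 (deco n q.out).2) :=
    rich_sublist _ _ (fun p hp => (h3 p hp).2) s (le_trans hs h)
  rwa [h1] at this

lemma fiber_none_subsingleton (K n : ℕ) :
    Subsingleton {q : QK K n // levelFn K n q = none} := by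
  constructor
  rintro ⟨q, hq⟩ ⟨q', hq'⟩
  have hcong : SimonCong n q.out q'.out := fun s hs =>
    iff_of_true (level_none_rich hq s hs) (level_none_rich hq' s hs)
  exact Subtype.ext (Quotient.out_equiv_out.mp hcong)

lemma fiber_some_inj (K n : ℕ) (m : Fin n) (q q' : QK K n)
    (hq : levelFn K n q = some m) (hq' : levelFn K n q' = some m)
    (hf : fiberFn K n (m : ℕ) q = fiberFn K n (m : ℕ) q') : q = q' := by
  rw [levelFn] at hq hq'
  split_ifs at hq hq' with h h'
  have hm : (deco n q.out).1.length = (m : ℕ) := congrArg Fin.val (Option.some.inj hq)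
  have hm' : (deco n q'.out).1.length = (m : ℕ) := congrArg Fin.val (Option.some.inj hq')
  obtain ⟨e1, _, e3, e4⟩ := deco_spec (K := K+1) n q.out
  obtain ⟨e1', _, e3', e4'⟩ := deco_spec (K := K+1) n q'.out
  have hfun := congrArg Prod.fst hf
  have hmiss : miss (deco n q.out).2 = miss (deco n q'.out).2 :=
    congrArg (Prod.fst ∘ Prod.snd) hf
  have hvq := congrArg (Prod.snd ∘ Prod.snd) hf
  simp only [fiberFn, Function.comp] at hfun hmiss hvq
  -- blocks data
  have hblocks : List.Forall₂
      (fun p r => p.2 = r.2 ∧ SimonCong (n - (m : ℕ) + 1) p.1 r.1)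
      (deco n q.out).1 (deco n q'.out).1 := by
    rw [List.forall₂_iff_get]
    refine ⟨by rw [hm, hm'], ?_⟩
    intro i h₁ h₂
    have hi : i < (m : ℕ) := by omega
    have heq := congrFun hfun ⟨i, hi⟩
    rw [dif_pos (show ((⟨i, hi⟩ : Fin (m:ℕ)) : ℕ) < (deco n q.out).1.length by simpa using h₁),
        dif_pos (show ((⟨i, hi⟩ : Fin (m:ℕ)) : ℕ) < (deco n q'.out).1.length by simpa using h₂)]
      at heq
    obtain ⟨ha, hcl⟩ := Prod.ext_iff.mp heq
    simp only at ha hcl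
    refine ⟨ha, ?_⟩
    rw [← ha] at hcl
    have hnotin : ((deco n q.out).1.get ⟨i, h₁⟩).2 ∉ ((deco n q.out).1.get ⟨i, h₁⟩).1 :=
      (e3 _ (List.get_mem _ _)).1
    have hnotin' : ((deco n q.out).1.get ⟨i, h₁⟩).2 ∉ ((deco n q'.out).1.get ⟨i, h₂⟩).1 := by
      rw [ha]; exact (e3' _ (List.get_mem _ _)).1
    exact cong_of_relabel hnotin hnotin' (Quotient.exact hcl)
  -- final segment
  have hex : ∃ a : Fin (K+2), a ∉ (deco n q.out).2 := e4 (by omega)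
  have hex' : ∃ a : Fin (K+2), a ∉ (deco n q'.out).2 := e4' (by omega)
  have hv : SimonCong (n - (m : ℕ)) (deco n q.out).2 (deco n q'.out).2 := by
    rw [← hmiss] at hvq
    exact cong_of_relabel (miss_spec hex) (by rw [hmiss]; exact miss_spec hex')
      (Quotient.exact hvq)
  -- transfer both ways
  have hmn : (m : ℕ) < n := m.isLt
  have hcong : SimonCong n q.out q'.out := by
    intro s hs
    constructor
    · intro hsub
      have := transfer (n - (m:ℕ) + 1) (n - (m:ℕ)) _ _ hv
        (deco n q.out).1 (deco n q'.out).1 n hblocks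
        (fun p hp => (e3' p hp).2) (by omega) (by omega) s hs (by rwa [e1])
      rwa [e1'] at this
    · intro hsub
      obtain ⟨hlen2, hget2⟩ := List.forall₂_iff_get.mp hblocks
      have hblocks' : List.Forall₂
          (fun p r => p.2 = r.2 ∧ SimonCong (n - (m : ℕ) + 1) p.1 r.1)
          (deco n q'.out).1 (deco n q.out).1 :=
        List.forall₂_iff_get.mpr ⟨hlen2.symm, fun i h₁ h₂ =>
          ⟨(hget2 i h₂ h₁).1.symm, fun w hw => ((hget2 i h₂ h₁).2 w hw).symm⟩⟩
      have hv' : SimonCong (n - (m : ℕ)) (deco n q'.out).2 (deco n q.out).2 :=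
        fun w hw => (hv w hw).symm
      have := transfer (n - (m:ℕ) + 1) (n - (m:ℕ)) _ _ hv'
        (deco n q'.out).1 (deco n q.out).1 n hblocks'
        (fun p hp => (e3 p hp).2) (by omega) (by omega) s hs (by rwa [e1'])
      rwa [e1] at this
  exact Quotient.out_equiv_out.mp hcong
/-! ### Counting -/

lemma dm_card (K n m : ℕ) :
    Nat.card (Dm K n m) =
      (K+2) ^ (m+1) * Nat.card (Quotient (simonSetoid (Fin (K+1)) (n - m + 1))) ^ m *
        Nat.card (Quotient (simonSetoid (Fin (K+1)) (n - m))) := by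
  haveI := simon_finite (Fin (K+1)) (n - m + 1)
  haveI := simon_finite (Fin (K+1)) (n - m)
  rw [Nat.card_prod, Nat.card_fun, Nat.card_prod, Nat.card_prod]
  simp only [Nat.card_eq_fintype_card, Fintype.card_fin]
  rw [mul_pow]
  ring

theorem main_bound (K n : ℕ) :
    Nat.card (QK K n) ≤ 1 + ∑ m ∈ Finset.range n,
      (K+2) ^ (m+1) * Nat.card (Quotient (simonSetoid (Fin (K+1)) (n - m + 1))) ^ m *
        Nat.card (Quotient (simonSetoid (Fin (K+1)) (n - m))) := by
  classical
  haveI hQ : Finite (QK K n) := simon_finite _ _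
  haveI := Fintype.ofFinite (QK K n)
  have key : Nat.card (QK K n) =
      ∑ t : Option (Fin n), Nat.card {q : QK K n // levelFn K n q = t} := by
    calc Nat.card (QK K n)
        = Nat.card (Σ t : Option (Fin n), {q : QK K n // levelFn K n q = t}) :=
          (Nat.card_congr (Equiv.sigmaFiberEquiv (levelFn K n))).symm
      _ = ∑ t : Option (Fin n), Nat.card {q : QK K n // levelFn K n q = t} := by
          haveI : ∀ t, Fintype {q : QK K n // levelFn K n q = t} :=
            fun t => Fintype.ofFinite _
          simp only [Nat.card_eq_fintype_card]
          exact Fintype.card_sigma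
  rw [key, Fintype.sum_option]
  have h1 : Nat.card {q : QK K n // levelFn K n q = none} ≤ 1 :=
    Finite.card_le_one_iff_subsingleton.mpr (fiber_none_subsingleton K n)
  have h2 : ∀ m : Fin n,
      Nat.card {q : QK K n // levelFn K n q = some m} ≤
        (K+2) ^ ((m:ℕ)+1) *
          Nat.card (Quotient (simonSetoid (Fin (K+1)) (n - (m:ℕ) + 1))) ^ (m:ℕ) *
          Nat.card (Quotient (simonSetoid (Fin (K+1)) (n - (m:ℕ)))) := by
    intro m
    haveI := simon_finite (Fin (K+1)) (n - (m:ℕ) + 1)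
    haveI := simon_finite (Fin (K+1)) (n - (m:ℕ))
    rw [← dm_card K n (m:ℕ)]
    exact Nat.card_le_card_of_injective
      (fun q => fiberFn K n (m:ℕ) q.val)
      (fun q q' hf => Subtype.ext (fiber_some_inj K n m q.val q'.val q.prop q'.prop hf))
  calc Nat.card {q : QK K n // levelFn K n q = none} +
        ∑ m : Fin n, Nat.card {q : QK K n // levelFn K n q = some m}
      ≤ 1 + ∑ m : Fin n, ((K+2) ^ ((m:ℕ)+1) *
          Nat.card (Quotient (simonSetoid (Fin (K+1)) (n - (m:ℕ) + 1))) ^ (m:ℕ) *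
          Nat.card (Quotient (simonSetoid (Fin (K+1)) (n - (m:ℕ))))) :=
        Nat.add_le_add h1 (Finset.sum_le_sum (fun m _ => h2 m))
    _ = 1 + ∑ m ∈ Finset.range n,
        ((K+2) ^ (m+1) *
          Nat.card (Quotient (simonSetoid (Fin (K+1)) (n - m + 1))) ^ m *
          Nat.card (Quotient (simonSetoid (Fin (K+1)) (n - m)))) := by
        rw [Fin.sum_univ_eq_sum_range (fun m => (K+2) ^ (m+1) *
          Nat.card (Quotient (simonSetoid (Fin (K+1)) (n - m + 1))) ^ m *
          Nat.card (Quotient (simonSetoid (Fin (K+1)) (n - m)))) n]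

theorem simon_index_le_sum (k n : ℕ) (hk : 2 ≤ k) :
    simonIndex k n ≤ 1 + ∑ m ∈ Finset.range n,
      k ^ (m + 1) * simonIndex (k - 1) (n - m + 1) ^ m * simonIndex (k - 1) (n - m) := by
  obtain ⟨K, rfl⟩ : ∃ K, k = K + 2 := ⟨k - 2, by omega⟩
  have hred : K + 2 - 1 = K + 1 := rfl
  simpa [simonIndex, hred] using main_bound K n
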